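/- Let q ≥ 2 be the cardinality of a finite field F_q and set b_n = (q^{n+1} − 1)/(q − 1). For every (s, w) ∈ ℂ² with Re(s + w) > 2 and Re(w) > 1, one has the decomposition Σ_{0 ≤ n ≤ m} b_n b_m q^{−ns} q^{−mw} = [q²/((q−1)²)]·Z(F_q[T], s+w−1)·Z(F_q[T], w) − [q/((q−1)²)]·Z(F_q[T], s+w)·Z(F_q[T], w+1) − [q/((q−1)²)]·Z(F_q[T], s+w)·Z(F_q[T], w) + [1/((q−1)²)]·Z(F_q[T], s+w+1)·Z(F_q[T], w+1), where each one-variable series Z(F_q[T], ·) on the right converges absolutely (its argument having real part > 1). -/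

import Mathlib

open Polynomial Complex

section Aux

variable (F : Type*) [Field F] [Fintype F]

/-- Monic polynomials of degree `n` correspond to `Fin n → F`. -/
noncomputable def monicFiberEquiv (n : ℕ) :
    {p : Polynomial F // p.Monic ∧ p.natDegree = n} ≃ (Fin n → F) :=
  (Polynomial.monicEquivDegreeLT n).trans (Polynomial.degreeLTEquiv F n).toEquiv

noncomputable instance monicFiberFintype (n : ℕ) :
    Fintype {p : Polynomial F // p.Monic ∧ p.natDegree = n} :=
  Fintype.ofEquiv _ (monicFiberEquiv F n).symm

lemma card_monicFiber (n : ℕ) :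
    Fintype.card {p : Polynomial F // p.Monic ∧ p.natDegree = n} = Fintype.card F ^ n := by
  rw [Fintype.card_congr (monicFiberEquiv F n)]
  simp

/-- Monic polynomials, organized by degree. -/
noncomputable def monicSigmaEquiv :
    {f : Polynomial F // f.Monic} ≃ Σ n : ℕ, {p : Polynomial F // p.Monic ∧ p.natDegree = n} :=
  ((Equiv.sigmaFiberEquiv fun f : {f : Polynomial F // f.Monic} => f.1.natDegree).symm).trans
    (Equiv.sigmaCongrRight fun n =>
      Equiv.subtypeSubtypeEquivSubtypeInter (fun p : Polynomial F => p.Monic)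
        (fun p => p.natDegree = n))

lemma monicSigmaEquiv_symm_natDegree
    (x : Σ n : ℕ, {p : Polynomial F // p.Monic ∧ p.natDegree = n}) :
    ((monicSigmaEquiv F).symm x).1.natDegree = x.1 := by
  have h := congrArg Sigma.fst (Equiv.apply_symm_apply (monicSigmaEquiv F) x)
  exact h

lemma monic_tsum_eq (g : ℕ → ℂ)
    (hg : Summable fun n : ℕ => (Fintype.card F : ℝ) ^ n * ‖g n‖) :
    (Summable fun f : {f : Polynomial F // f.Monic} => ‖g f.1.natDegree‖) ∧
      ∑' f : {f : Polynomial F // f.Monic}, g f.1.natDegree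
        = ∑' n : ℕ, (Fintype.card F : ℂ) ^ n * g n := by
  have hfiberR : ∀ (n : ℕ) (h : ℝ),
      ∑' _ : {p : Polynomial F // p.Monic ∧ p.natDegree = n}, h
        = (Fintype.card F : ℝ) ^ n * h := by
    intro n h
    rw [tsum_fintype, Finset.sum_const, Finset.card_univ, card_monicFiber, nsmul_eq_mul,
      Nat.cast_pow]
  have hfiberC : ∀ (n : ℕ) (h : ℂ),
      ∑' _ : {p : Polynomial F // p.Monic ∧ p.natDegree = n}, h
        = (Fintype.card F : ℂ) ^ n * h := by
    intro n h
    rw [tsum_fintype, Finset.sum_const, Finset.card_univ, card_monicFiber, nsmul_eq_mul,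
      Nat.cast_pow]
  have hsig : Summable fun x : Σ n : ℕ,
      {p : Polynomial F // p.Monic ∧ p.natDegree = n} => ‖g x.1‖ := by
    rw [summable_sigma_of_nonneg (fun _ => norm_nonneg _)]
    refine ⟨fun n => Summable.of_finite, ?_⟩
    exact hg.congr fun n => (hfiberR n _).symm
  have hsummon : Summable fun f : {f : Polynomial F // f.Monic} => ‖g f.1.natDegree‖ := by
    rw [← Equiv.summable_iff (monicSigmaEquiv F).symm]
    exact hsig.congr fun x => by
      simp only [Function.comp_apply, monicSigmaEquiv_symm_natDegree]
  refine ⟨hsummon, ?_⟩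
  have hsigC : Summable fun x : Σ n : ℕ,
      {p : Polynomial F // p.Monic ∧ p.natDegree = n} => g x.1 := hsig.of_norm
  calc ∑' f : {f : Polynomial F // f.Monic}, g f.1.natDegree
      = ∑' x : Σ n : ℕ, {p : Polynomial F // p.Monic ∧ p.natDegree = n},
          g ((monicSigmaEquiv F).symm x).1.natDegree :=
        ((monicSigmaEquiv F).symm.tsum_eq _).symm
    _ = ∑' x : Σ n : ℕ, {p : Polynomial F // p.Monic ∧ p.natDegree = n}, g x.1 :=
        tsum_congr fun x => by rw [monicSigmaEquiv_symm_natDegree]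
    _ = ∑' n : ℕ, ∑' _ : {p : Polynomial F // p.Monic ∧ p.natDegree = n}, g n :=
        Summable.tsum_sigma hsigC
    _ = ∑' n : ℕ, (Fintype.card F : ℂ) ^ n * g n := tsum_congr fun n => hfiberC n _

end Aux

/-- The zeta function of `F_q[T]`: `Z(F_q[T], z) = Σ_{f monic} |f|^{−z}`
with `|f| = q^{deg f}`. -/
noncomputable def polyZeta (F : Type*) [Field F] [Fintype F] (z : ℂ) : ℂ :=
  ∑' f : {f : Polynomial F // f.Monic},
    ((Fintype.card F : ℂ) ^ f.1.natDegree : ℂ) ^ (-z)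

section Repr

variable (F : Type*) [Field F] [Fintype F]

lemma polyZeta_repr (z : ℂ) (hz : 1 < z.re) :
    (Summable fun f : {f : Polynomial F // f.Monic} =>
      ‖((Fintype.card F : ℂ) ^ f.1.natDegree : ℂ) ^ (-z)‖) ∧
    polyZeta F z
      = ∑' n : ℕ, ((Fintype.card F : ℂ) * (Fintype.card F : ℂ) ^ (-z)) ^ n := by
  have hq : 1 < Fintype.card F := Fintype.one_lt_card
  have hq0 : (0:ℝ) < (Fintype.card F : ℝ) := by positivity
  have hq1 : (1:ℝ) < (Fintype.card F : ℝ) := by exact_mod_cast hq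
  have hcast : ((Fintype.card F : ℕ) : ℂ) = (((Fintype.card F : ℕ) : ℝ) : ℂ) := by norm_cast
  have him : ∀ n : ℕ, (Complex.log (((Fintype.card F : ℕ) : ℝ) : ℂ) * (n : ℂ)).im = 0 := by
    intro n
    rw [← Complex.ofReal_log hq0.le, ← Complex.ofReal_natCast n, ← Complex.ofReal_mul]
    exact Complex.ofReal_im _
  have hpow : ∀ n : ℕ, (((Fintype.card F : ℂ)) ^ n) ^ (-z)
      = ((Fintype.card F : ℂ) ^ (-z)) ^ n := by
    intro n
    rw [hcast, ← Complex.cpow_natCast, ← Complex.cpow_mul, Complex.cpow_nat_mul]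
    · rw [him]; linarith [Real.pi_pos]
    · rw [him]; linarith [Real.pi_pos]
  have hnormpt : ∀ n : ℕ, ‖(((Fintype.card F : ℂ)) ^ n) ^ (-z)‖
      = ((Fintype.card F : ℝ) ^ (-z.re)) ^ n := by
    intro n
    rw [hpow n, norm_pow]
    congr 1
    rw [hcast, Complex.norm_cpow_eq_rpow_re_of_pos hq0, Complex.neg_re]
  have hr1 : (Fintype.card F : ℝ) * (Fintype.card F : ℝ) ^ (-z.re) < 1 := by
    calc (Fintype.card F : ℝ) * (Fintype.card F : ℝ) ^ (-z.re)
        = (Fintype.card F : ℝ) ^ (1 + -z.re) := by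
          rw [Real.rpow_add hq0, Real.rpow_one]
      _ < 1 := Real.rpow_lt_one_of_one_lt_of_neg hq1 (by linarith)
  have hr0 : 0 ≤ (Fintype.card F : ℝ) * (Fintype.card F : ℝ) ^ (-z.re) := by positivity
  have hg : Summable fun n : ℕ =>
      (Fintype.card F : ℝ) ^ n * ‖(((Fintype.card F : ℂ)) ^ n) ^ (-z)‖ := by
    refine (summable_geometric_of_lt_one hr0 hr1).congr fun n => ?_
    rw [hnormpt n, mul_pow]
  obtain ⟨h1, h2⟩ := monic_tsum_eq F (fun n => (((Fintype.card F : ℂ)) ^ n) ^ (-z)) hg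
  refine ⟨h1, ?_⟩
  refine h2.trans ?_
  exact tsum_congr fun n => by rw [hpow n, mul_pow]

end Repr

/-- Reindexing pairs. -/
def addEquiv : ℕ × ℕ ≃ {p : ℕ × ℕ // p.1 ≤ p.2} :=
  ⟨fun kl => ⟨(kl.1, kl.1 + kl.2), Nat.le_add_right _ _⟩,
   fun p => (p.1.1, p.1.2 - p.1.1),
   fun kl => by obtain ⟨k, l⟩ := kl; simp,
   fun p => by obtain ⟨⟨n, m⟩, h⟩ := p; simp [Nat.add_sub_cancel' h]⟩

@[simp] lemma addEquiv_apply (kl : ℕ × ℕ) :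
    addEquiv kl = ⟨(kl.1, kl.1 + kl.2), Nat.le_add_right _ _⟩ := rfl

lemma assembly {c u v Z1 Z2 Z3 W1 W2 A1 A2 A3 B1 B2 : ℂ} (hc1 : c - 1 ≠ 0)
    (hA1 : A1 = c * c * (u * v)) (hA2 : A2 = c * (u * v)) (hA3 : A3 = u * v)
    (hB1 : B1 = c * v) (hB2 : B2 = v)
    (nA1 : ‖A1‖ < 1) (nA2 : ‖A2‖ < 1) (nA3 : ‖A3‖ < 1) (nB1 : ‖B1‖ < 1) (nB2 : ‖B2‖ < 1)
    (hZ1 : Z1 = ∑' n : ℕ, A1 ^ n) (hZ2 : Z2 = ∑' n : ℕ, A2 ^ n) (hZ3 : Z3 = ∑' n : ℕ, A3 ^ n)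
    (hW1 : W1 = ∑' n : ℕ, B1 ^ n) (hW2 : W2 = ∑' n : ℕ, B2 ^ n) :
    (∑' kl : ℕ × ℕ,
      ((c ^ (kl.1 + 1) - 1) / (c - 1)) * ((c ^ (kl.1 + kl.2 + 1) - 1) / (c - 1))
        * u ^ kl.1 * v ^ (kl.1 + kl.2))
    = c ^ 2 / (c - 1) ^ 2 * (Z1 * W1) - c / (c - 1) ^ 2 * (Z2 * W2)
      - c / (c - 1) ^ 2 * (Z2 * W1) + 1 / (c - 1) ^ 2 * (Z3 * W2) := by
  have geom : ∀ x : ℂ, ‖x‖ < 1 → Summable fun n : ℕ => ‖x ^ n‖ := fun x hx => by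
    simpa only [norm_pow] using summable_geometric_of_lt_one (norm_nonneg x) hx
  have pair : ∀ X Y : ℂ, ‖X‖ < 1 → ‖Y‖ < 1 →
      Summable (fun kl : ℕ × ℕ => X ^ kl.1 * Y ^ kl.2) := fun X Y hX hY =>
    (Summable.mul_norm (geom X hX) (geom Y hY)).of_norm
  have pairT : ∀ X Y : ℂ, ‖X‖ < 1 → ‖Y‖ < 1 →
      (∑' kl : ℕ × ℕ, X ^ kl.1 * Y ^ kl.2) = (∑' n : ℕ, X ^ n) * (∑' n : ℕ, Y ^ n) :=
    fun X Y hX hY => (tsum_mul_tsum_of_summable_norm (geom X hX) (geom Y hY)).symm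
  have hpt : ∀ kl : ℕ × ℕ,
      ((c ^ (kl.1 + 1) - 1) / (c - 1)) * ((c ^ (kl.1 + kl.2 + 1) - 1) / (c - 1))
          * u ^ kl.1 * v ^ (kl.1 + kl.2)
        = c ^ 2 / (c - 1) ^ 2 * (A1 ^ kl.1 * B1 ^ kl.2)
          - c / (c - 1) ^ 2 * (A2 ^ kl.1 * B2 ^ kl.2)
          - c / (c - 1) ^ 2 * (A2 ^ kl.1 * B1 ^ kl.2)
          + 1 / (c - 1) ^ 2 * (A3 ^ kl.1 * B2 ^ kl.2) := by
    rintro ⟨k, l⟩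
    simp only [hA1, hA2, hA3, hB1, hB2, mul_pow, pow_add, pow_one]
    field_simp
    ring
  have s1 := (pair A1 B1 nA1 nB1).mul_left (c ^ 2 / (c - 1) ^ 2)
  have s2 := (pair A2 B2 nA2 nB2).mul_left (c / (c - 1) ^ 2)
  have s3 := (pair A2 B1 nA2 nB1).mul_left (c / (c - 1) ^ 2)
  have s4 := (pair A3 B2 nA3 nB2).mul_left ((1 : ℂ) / (c - 1) ^ 2)
  calc (∑' kl : ℕ × ℕ,
      ((c ^ (kl.1 + 1) - 1) / (c - 1)) * ((c ^ (kl.1 + kl.2 + 1) - 1) / (c - 1))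
        * u ^ kl.1 * v ^ (kl.1 + kl.2))
      = ∑' kl : ℕ × ℕ,
          (c ^ 2 / (c - 1) ^ 2 * (A1 ^ kl.1 * B1 ^ kl.2)
            - c / (c - 1) ^ 2 * (A2 ^ kl.1 * B2 ^ kl.2)
            - c / (c - 1) ^ 2 * (A2 ^ kl.1 * B1 ^ kl.2)
            + 1 / (c - 1) ^ 2 * (A3 ^ kl.1 * B2 ^ kl.2)) := tsum_congr hpt
    _ = c ^ 2 / (c - 1) ^ 2 * (Z1 * W1) - c / (c - 1) ^ 2 * (Z2 * W2)
          - c / (c - 1) ^ 2 * (Z2 * W1) + 1 / (c - 1) ^ 2 * (Z3 * W2) := by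
        rw [Summable.tsum_add ((s1.sub s2).sub s3) s4, Summable.tsum_sub (s1.sub s2) s3, Summable.tsum_sub s1 s2,
          tsum_mul_left, tsum_mul_left, tsum_mul_left, tsum_mul_left,
          pairT A1 B1 nA1 nB1, pairT A2 B2 nA2 nB2, pairT A2 B1 nA2 nB1, pairT A3 B2 nA3 nB2,
          hZ1, hZ2, hZ3, hW1, hW2]

/-- With `b_n = (q^{n+1} − 1)/(q − 1)`, for `Re(s+w) > 2` and
`Re(w) > 1`, the double zeta function of `F_q(T)` decomposes as a rational
linear combination of products of one-variable zeta functions of `F_q[T]`,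
each of whose defining series converges absolutely. -/
theorem double_zeta_rational_function_field_decomposition
    (F : Type*) [Field F] [Fintype F] (s w : ℂ)
    (h1 : 2 < (s + w).re) (h2 : 1 < w.re) :
    (∀ z ∈ ({s + w - 1, w, s + w, w + 1, s + w + 1} : Set ℂ),
      Summable fun f : {f : Polynomial F // f.Monic} =>
        ‖((Fintype.card F : ℂ) ^ f.1.natDegree : ℂ) ^ (-z)‖) ∧
    (∑' p : {p : ℕ × ℕ // p.1 ≤ p.2},
        (((Fintype.card F : ℂ) ^ (p.1.1 + 1) - 1) / ((Fintype.card F : ℂ) - 1)) *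
        (((Fintype.card F : ℂ) ^ (p.1.2 + 1) - 1) / ((Fintype.card F : ℂ) - 1)) *
        (Fintype.card F : ℂ) ^ (-(p.1.1 : ℂ) * s) *
        (Fintype.card F : ℂ) ^ (-(p.1.2 : ℂ) * w)) =
      (Fintype.card F : ℂ) ^ 2 / ((Fintype.card F : ℂ) - 1) ^ 2 *
          (polyZeta F (s + w - 1) * polyZeta F w) -
        (Fintype.card F : ℂ) / ((Fintype.card F : ℂ) - 1) ^ 2 *
          (polyZeta F (s + w) * polyZeta F (w + 1)) -
        (Fintype.card F : ℂ) / ((Fintype.card F : ℂ) - 1) ^ 2 *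
          (polyZeta F (s + w) * polyZeta F w) +
        1 / ((Fintype.card F : ℂ) - 1) ^ 2 *
          (polyZeta F (s + w + 1) * polyZeta F (w + 1)) := by
  have hq : 1 < Fintype.card F := Fintype.one_lt_card
  have hq0 : (0:ℝ) < (Fintype.card F : ℝ) := by positivity
  have hq1 : (1:ℝ) < (Fintype.card F : ℝ) := by exact_mod_cast hq
  have hc0 : (Fintype.card F : ℂ) ≠ 0 := by
    simp only [ne_eq, Nat.cast_eq_zero]; omega
  have hc1 : (Fintype.card F : ℂ) - 1 ≠ 0 := by
    rw [sub_ne_zero]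
    exact_mod_cast (by omega : Fintype.card F ≠ 1)
  have hsw : 2 < s.re + w.re := by simpa [Complex.add_re] using h1
  have hnorm : ∀ t : ℂ, ‖(Fintype.card F : ℂ) ^ t‖ = (Fintype.card F : ℝ) ^ t.re := by
    intro t
    rw [show ((Fintype.card F : ℕ) : ℂ) = (((Fintype.card F : ℕ) : ℝ) : ℂ) by norm_cast,
      Complex.norm_cpow_eq_rpow_re_of_pos hq0]
  have hlt : ∀ t : ℂ, t.re < 0 → ‖(Fintype.card F : ℂ) ^ t‖ < 1 := fun t ht => by
    rw [hnorm]
    exact Real.rpow_lt_one_of_one_lt_of_neg hq1 ht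
  constructor
  · intro z hz
    have hz1 : 1 < z.re := by
      simp only [Set.mem_insert_iff, Set.mem_singleton_iff] at hz
      rcases hz with rfl | rfl | rfl | rfl | rfl
      all_goals try simp only [Complex.add_re, Complex.sub_re, Complex.one_re]
      all_goals linarith
    exact (polyZeta_repr F z hz1).1
  · -- abbreviations
    set c : ℂ := (Fintype.card F : ℂ) with hcdef
    have eA1 : c ^ ((2:ℂ) - s - w) = c * c * (c ^ (-s) * c ^ (-w)) := by
      rw [show (2:ℂ) - s - w = 1 + (1 + (-s + -w)) by ring, Complex.cpow_add _ _ hc0,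
        Complex.cpow_add _ _ hc0, Complex.cpow_add _ _ hc0, Complex.cpow_one]
      ring
    have eA2 : c ^ ((1:ℂ) - s - w) = c * (c ^ (-s) * c ^ (-w)) := by
      rw [show (1:ℂ) - s - w = 1 + (-s + -w) by ring, Complex.cpow_add _ _ hc0,
        Complex.cpow_add _ _ hc0, Complex.cpow_one]
    have eA3 : c ^ (-s - w) = c ^ (-s) * c ^ (-w) := by
      rw [show -s - w = -s + -w by ring, Complex.cpow_add _ _ hc0]
    have eB1 : c ^ ((1:ℂ) - w) = c * c ^ (-w) := by
      rw [show (1:ℂ) - w = 1 + -w by ring, Complex.cpow_add _ _ hc0, Complex.cpow_one]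
    have nA1 : ‖c ^ ((2:ℂ) - s - w)‖ < 1 := hlt _ (by
      simp only [Complex.sub_re, Complex.re_ofNat]; linarith)
    have nA2 : ‖c ^ ((1:ℂ) - s - w)‖ < 1 := hlt _ (by
      simp only [Complex.sub_re, Complex.one_re]; linarith)
    have nA3 : ‖c ^ (-s - w)‖ < 1 := hlt _ (by
      simp only [Complex.sub_re, Complex.neg_re]; linarith)
    have nB1 : ‖c ^ ((1:ℂ) - w)‖ < 1 := hlt _ (by
      simp only [Complex.sub_re, Complex.one_re]; linarith)
    have nB2 : ‖c ^ (-w)‖ < 1 := hlt _ (by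
      simp only [Complex.neg_re]; linarith)
    -- polyZeta values
    have hZgen : ∀ z t : ℂ, 1 < z.re → (1 : ℂ) + -z = t →
        polyZeta F z = ∑' n : ℕ, (c ^ t) ^ n := by
      intro z t hz ht
      rw [(polyZeta_repr F z hz).2]
      refine tsum_congr fun n => ?_
      rw [← ht, Complex.cpow_add _ _ hc0, Complex.cpow_one]
    have hZ1 : polyZeta F (s + w - 1) = ∑' n : ℕ, (c ^ ((2:ℂ) - s - w)) ^ n :=
      hZgen _ _ (by simp only [Complex.sub_re, Complex.add_re, Complex.one_re]; linarith)
        (by ring)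
    have hZ2 : polyZeta F (s + w) = ∑' n : ℕ, (c ^ ((1:ℂ) - s - w)) ^ n :=
      hZgen _ _ (by simp only [Complex.add_re]; linarith) (by ring)
    have hZ3 : polyZeta F (s + w + 1) = ∑' n : ℕ, (c ^ (-s - w)) ^ n :=
      hZgen _ _ (by simp only [Complex.add_re, Complex.one_re]; linarith) (by ring)
    have hW1 : polyZeta F w = ∑' n : ℕ, (c ^ ((1:ℂ) - w)) ^ n :=
      hZgen _ _ h2 (by ring)
    have hW2 : polyZeta F (w + 1) = ∑' n : ℕ, (c ^ (-w)) ^ n :=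
      hZgen _ _ (by simp only [Complex.add_re, Complex.one_re]; linarith) (by ring)
    calc (∑' p : {p : ℕ × ℕ // p.1 ≤ p.2},
        ((c ^ (p.1.1 + 1) - 1) / (c - 1)) * ((c ^ (p.1.2 + 1) - 1) / (c - 1)) *
          c ^ (-(p.1.1 : ℂ) * s) * c ^ (-(p.1.2 : ℂ) * w))
        = ∑' kl : ℕ × ℕ,
            ((c ^ ((addEquiv kl).1.1 + 1) - 1) / (c - 1)) *
              ((c ^ ((addEquiv kl).1.2 + 1) - 1) / (c - 1)) *
              c ^ (-((addEquiv kl).1.1 : ℂ) * s) * c ^ (-((addEquiv kl).1.2 : ℂ) * w) :=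
          (Equiv.tsum_eq addEquiv _).symm
      _ = ∑' kl : ℕ × ℕ,
            ((c ^ (kl.1 + 1) - 1) / (c - 1)) * ((c ^ (kl.1 + kl.2 + 1) - 1) / (c - 1))
              * (c ^ (-s)) ^ kl.1 * (c ^ (-w)) ^ (kl.1 + kl.2) := by
          refine tsum_congr fun kl => ?_
          simp only [addEquiv_apply]
          rw [show -((kl.1 : ℕ) : ℂ) * s = ((kl.1 : ℕ) : ℂ) * (-s) by ring,
            show -(((kl.1 + kl.2 : ℕ)) : ℂ) * w = (((kl.1 + kl.2 : ℕ)) : ℂ) * (-w) by ring,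
            Complex.cpow_nat_mul, Complex.cpow_nat_mul]
      _ = c ^ 2 / (c - 1) ^ 2 * (polyZeta F (s + w - 1) * polyZeta F w)
            - c / (c - 1) ^ 2 * (polyZeta F (s + w) * polyZeta F (w + 1))
            - c / (c - 1) ^ 2 * (polyZeta F (s + w) * polyZeta F w)
            + 1 / (c - 1) ^ 2 * (polyZeta F (s + w + 1) * polyZeta F (w + 1)) :=
          assembly hc1 eA1 eA2 eA3 eB1 rfl nA1 nA2 nA3 nB1 nB2 hZ1 hZ2 hZ3 hW1 hW2
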